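/- arXiv:2504.18923 — 2 statements merged into one kernel-verified Lean document; each statement's English description precedes it below -/
import Mathlib

section
/- For type $A_r$ (real split case), with $2\rho$ and $\Theta$ as in the table, the maximum over positive roots $\alpha \in \{e_i - e_j : 1 \le i < j \le r+1\}$ of $\langle \alpha, 2\rho - \Theta\rangle$ equals $2r-1$, attained at $\alpha = e_1 - e_{r+1}$. -/
open scoped RealInnerProductSpace

theorem stmt_2 (r : ℕ) (hr : 1 ≤ r)
    (twoRho Θ : EuclideanSpace ℝ (Fin (r + 1)))
    (hρ : ∀ i : Fin (r + 1), twoRho i = (r : ℝ) + 2 - 2 * ((i : ℕ) + 1))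
    (hΘ : ∀ i : Fin (r + 1), Θ i =
      if 2 * ((i : ℕ) + 1) < r + 2 then (1 / 2 : ℝ)
      else if 2 * ((i : ℕ) + 1) = r + 2 then 0 else -(1 / 2)) :
    IsGreatest {x : ℝ | ∃ i j : Fin (r + 1), i < j ∧
        x = ⟪EuclideanSpace.single i (1 : ℝ) - EuclideanSpace.single j 1, twoRho - Θ⟫}
      (2 * r - 1) ∧
    ⟪EuclideanSpace.single (0 : Fin (r + 1)) (1 : ℝ) - EuclideanSpace.single (Fin.last r) 1,
        twoRho - Θ⟫ = 2 * r - 1 := by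
  have key : ∀ i j : Fin (r + 1),
      ⟪EuclideanSpace.single i (1 : ℝ) - EuclideanSpace.single j 1, twoRho - Θ⟫
        = (twoRho i - Θ i) - (twoRho j - Θ j) := by
    intro i j
    simp [inner_sub_left, inner_sub_right, EuclideanSpace.inner_single_left]
    ring
  have hθ : ∀ i : Fin (r + 1), -(1/2 : ℝ) ≤ Θ i ∧ Θ i ≤ 1/2 := by
    intro i; rw [hΘ]; split_ifs <;> norm_num
  have h0 : twoRho 0 - Θ 0 = (r : ℝ) - 1/2 := by
    rw [hρ, hΘ]
    have : ((0 : Fin (r + 1)) : ℕ) = 0 := rfl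
    rw [this]
    rw [if_pos (by omega)]
    push_cast; ring
  have hlast : twoRho (Fin.last r) - Θ (Fin.last r) = -(r : ℝ) + 1/2 := by
    rw [hρ, hΘ, Fin.val_last]
    rw [if_neg (by omega), if_neg (by omega)]
    push_cast; ring
  have hub : ∀ i : Fin (r + 1), twoRho i - Θ i ≤ (r : ℝ) - 1/2 := by
    intro i
    rcases Nat.eq_zero_or_pos (i : ℕ) with h | h
    · have : i = 0 := Fin.ext h
      rw [this, h0]
    · have h1 : (1 : ℝ) ≤ (i : ℕ) := by exact_mod_cast h
      have := (hθ i).1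
      rw [hρ]; linarith
  have hlb : ∀ j : Fin (r + 1), -(r : ℝ) + 1/2 ≤ twoRho j - Θ j := by
    intro j
    rcases eq_or_lt_of_le (Nat.lt_succ_iff.mp j.isLt) with h | h
    · have : j = Fin.last r := Fin.ext h
      rw [this, hlast]
    · have h1 : ((j : ℕ) : ℝ) ≤ (r : ℝ) - 1 := by
        have h2 : (j : ℕ) + 1 ≤ r := h
        have h3 : ((j : ℕ) : ℝ) + 1 ≤ (r : ℝ) := by exact_mod_cast h2
        linarith
      have := (hθ j).2
      rw [hρ]; linarith
  refine ⟨⟨⟨0, Fin.last r, ?_, ?_⟩, ?_⟩, ?_⟩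
  · rw [Fin.lt_def]; simpa [Fin.val_last] using (by omega : 0 < r)
  · rw [key, h0, hlast]; push_cast; ring
  · rintro x ⟨i, j, hij, rfl⟩
    rw [key]
    have := hub i; have := hlb j
    push_cast; linarith
  · rw [key, h0, hlast]; push_cast; ring
end

section
/- Let $r = 2m+1$ be odd, $m \geq 1$, and $k \geq 1$. For type $B_r$ with short root multiplicity $k$, let $2\rho = \sum_{i=1}^r(2r-2i+k)e_i$ and $\Theta = e_1+\cdots+e_m + \frac{1}{2}e_{m+1}$. Then $\langle \Theta, 2\rho - \Theta\rangle = 3m^2 + km + m + \frac{k}{2} - \frac{1}{4}$ and $\frac{\langle \Theta, 2\rho-\Theta\rangle}{8m-4+2k} > \frac{3r}{16}$. -/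
open scoped RealInnerProductSpace

lemma gaussSumReal (n : ℕ) : ∑ i ∈ Finset.range n, (i : ℝ) = n * (n - 1) / 2 := by
  induction n with
  | zero => simp
  | succ p ih => rw [Finset.sum_range_succ, ih]; push_cast; ring

theorem stmt_12 (m r k : ℕ) (hm : 1 ≤ m) (hr : r = 2 * m + 1) (hk : 1 ≤ k)
    (twoRho Θ : EuclideanSpace ℝ (Fin r))
    (hρ : ∀ i : Fin r, twoRho i = 2 * (r : ℝ) - 2 * ((i : ℕ) + 1) + k)
    (hΘ : ∀ i : Fin r, Θ i =
      if (i : ℕ) < m then (1 : ℝ) else if (i : ℕ) = m then 1 / 2 else 0) :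
    ⟪Θ, twoRho - Θ⟫ = 3 * (m : ℝ) ^ 2 + k * m + m + k / 2 - 1 / 4 ∧
    ⟪Θ, twoRho - Θ⟫ / (8 * m - 4 + 2 * k) > 3 * r / 16 := by
  subst hr
  set g : ℕ → ℝ := fun i =>
    (if i < m then (1:ℝ) else if i = m then 1/2 else 0) *
      ((2 * ((2*m+1 : ℕ) : ℝ) - 2 * (i + 1) + k) -
        (if i < m then (1:ℝ) else if i = m then 1/2 else 0)) with hg
  have hsum : ⟪Θ, twoRho - Θ⟫ = ∑ i ∈ Finset.range (2*m+1), g i := by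
    rw [PiLp.inner_apply]
    rw [← Fin.sum_univ_eq_sum_range g]
    apply Finset.sum_congr rfl
    intro i _
    simp only [RCLike.inner_apply, conj_trivial, PiLp.sub_apply, hρ, hΘ, hg]
    exact mul_comm _ _
  have hval : ⟪Θ, twoRho - Θ⟫ = 3 * (m : ℝ) ^ 2 + k * m + m + k / 2 - 1 / 4 := by
    rw [hsum]
    have h1 : ∑ i ∈ Finset.range (2*m+1), g i = ∑ i ∈ Finset.range (m+1), g i := by
      symm
      apply Finset.sum_subset
      · exact Finset.range_subset_range.2 (by omega)
      · intro i _ hi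
        simp only [Finset.mem_range, not_lt] at hi
        have h2 : ¬ i < m := by omega
        have h3 : i ≠ m := by omega
        simp [hg, h2, h3]
    have h2 : ∑ i ∈ Finset.range m, g i
        = (m : ℝ) * (4*(m:ℝ) + k - 1) - 2 * ∑ i ∈ Finset.range m, (i:ℝ) := by
      have : ∑ i ∈ Finset.range m, g i
          = ∑ i ∈ Finset.range m, ((4*(m:ℝ) + k - 1) - 2 * (i:ℝ)) := by
        apply Finset.sum_congr rfl
        intro i hi
        simp only [Finset.mem_range] at hi
        simp [hg, hi]
        push_cast
        ring
      rw [this, Finset.sum_sub_distrib, Finset.sum_const, Finset.card_range, nsmul_eq_mul,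
        ← Finset.mul_sum]
    have h3 : g m = (1/2) * ((2*(2*(m:ℝ)+1) - 2*((m:ℝ)+1) + k) - 1/2) := by
      simp [hg]
    rw [h1, Finset.sum_range_succ, h2, h3, gaussSumReal]
    have : (1:ℝ) ≤ m := by exact_mod_cast hm
    ring
  refine ⟨hval, ?_⟩
  have h1 : (1:ℝ) ≤ m := by exact_mod_cast hm
  have h2 : (1:ℝ) ≤ k := by exact_mod_cast hk
  rw [hval, gt_iff_lt, div_lt_div_iff₀ (by norm_num) (by linarith)]
  push_cast
  nlinarith [mul_nonneg (sub_nonneg.2 h1) (sub_nonneg.2 h2)]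
end
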